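/- For all natural numbers l, m and all indices 0 ≤ i ≤ l, 0 ≤ a ≤ m, the operator C on V_l⊗V_m satisfies C(v_i^{(l)}⊗v_a^{(m)}) = −( l(l+2)/8 + 5m(m+2)/8 − (2i−l)(2a−m)/4 )·v_i^{(l)}⊗v_a^{(m)} + (1/2)√((i+1)(l−i)a(m−a+1))·v_{i+1}^{(l)}⊗v_{a−1}^{(m)} + (1/2)√(i(l−i+1)(a+1)(m−a))·v_{i−1}^{(l)}⊗v_{a+1}^{(m)}, where any term whose index lies outside the range [0,l] or [0,m] has vanishing coefficient. -/

import Mathlib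

/-!
STATEMENT 4: Action of the Casimir-type operator
C = (1/2)Σ(D_l(X_r)⊗id)² + (5/2)Σ(id⊗D_m(X_r))² − Σ(D_l(X_r)⊗id)∘(id⊗D_m(X_r))
on the normalized basis vectors v_i^{(l)}⊗v_a^{(m)} of V_l⊗V_m.
-/

open MvPolynomial TensorProduct

noncomputable section

abbrev Mat2 : Type := Matrix (Fin 2) (Fin 2) ℂ

abbrev P2 : Type := MvPolynomial (Fin 2) ℂ

/-- The derived action D_n(X) f := u₀·∂f/∂z₀ + u₁·∂f/∂z₁ with (u₀,u₁) = (z₀,z₁)X. -/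
def Dop (g : Mat2) : P2 →ₗ[ℂ] P2 :=
  ∑ j : Fin 2,
    (LinearMap.mulLeft ℂ (∑ i : Fin 2, MvPolynomial.C (g i j) * MvPolynomial.X i)).comp
      (MvPolynomial.pderiv j).toLinearMap

/-- The standard basis X₁, X₂, X₃ of su(2). -/
def Xsu : Fin 3 → Mat2 :=
  ![(1 / 2 : ℂ) • !![Complex.I, 0; 0, -Complex.I],
    (1 / 2 : ℂ) • !![0, 1; -1, 0],
    (1 / 2 : ℂ) • !![0, Complex.I; Complex.I, 0]]

/-- D(X)⊗id on P2 ⊗ P2. -/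
def lten (f : P2 →ₗ[ℂ] P2) : P2 ⊗[ℂ] P2 →ₗ[ℂ] P2 ⊗[ℂ] P2 :=
  TensorProduct.map f LinearMap.id

/-- id⊗D(X) on P2 ⊗ P2. -/
def rten (f : P2 →ₗ[ℂ] P2) : P2 ⊗[ℂ] P2 →ₗ[ℂ] P2 ⊗[ℂ] P2 :=
  TensorProduct.map LinearMap.id f

/-- The Casimir-type operator C. -/
def CasOp : P2 ⊗[ℂ] P2 →ₗ[ℂ] P2 ⊗[ℂ] P2 :=
  (1 / 2 : ℂ) • (∑ r : Fin 3, lten (Dop (Xsu r)) ∘ₗ lten (Dop (Xsu r)))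
    + (5 / 2 : ℂ) • (∑ r : Fin 3, rten (Dop (Xsu r)) ∘ₗ rten (Dop (Xsu r)))
    - ∑ r : Fin 3, lten (Dop (Xsu r)) ∘ₗ rten (Dop (Xsu r))

/-- The normalized basis vector v_k^{(n)} = z₀^{n−k} z₁^{k} / √(k!(n−k)!). -/
def vb (n k : ℕ) : P2 :=
  ((Real.sqrt ((k.factorial * (n - k).factorial : ℕ) : ℝ) : ℂ))⁻¹
    • (X 0 ^ (n - k) * X 1 ^ k : P2)

lemma Dop_mono (g : Mat2) (p q : ℕ) :
    Dop g (X 0 ^ p * X 1 ^ q : P2) =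
      ((p:ℂ) * g 0 0 + (q:ℂ) * g 1 1) • (X 0 ^ p * X 1 ^ q)
      + ((q:ℂ) * g 0 1) • (X 0 ^ (p+1) * X 1 ^ (q-1))
      + ((p:ℂ) * g 1 0) • (X 0 ^ (p-1) * X 1 ^ (q+1)) := by
  simp only [Dop, LinearMap.sum_apply, LinearMap.comp_apply,
    Fin.sum_univ_two, LinearMap.mulLeft_apply]
  simp only [pderiv_mul, pderiv_pow, pderiv_X_self, pderiv_X_of_ne (by decide : (1:Fin 2) ≠ 0),
    pderiv_X_of_ne (by decide : (0:Fin 2) ≠ 1), smul_eq_C_mul, map_mul, map_add, map_natCast]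
  rcases p with _|p <;> rcases q with _|q <;> simp <;> ring

lemma D0_mono (p q : ℕ) :
    Dop (Xsu 0) (X 0 ^ p * X 1 ^ q : P2)
      = (Complex.I * ((p:ℂ) - q) / 2) • (X 0 ^ p * X 1 ^ q) := by
  rw [Dop_mono]
  simp [Xsu]
  ring

lemma D1_mono (p q : ℕ) :
    Dop (Xsu 1) (X 0 ^ p * X 1 ^ q : P2)
      = ((q:ℂ)/2) • (X 0 ^ (p+1) * X 1 ^ (q-1)) - ((p:ℂ)/2) • (X 0 ^ (p-1) * X 1 ^ (q+1)) := by
  rw [Dop_mono]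
  simp [Xsu]
  module

lemma D2_mono (p q : ℕ) :
    Dop (Xsu 2) (X 0 ^ p * X 1 ^ q : P2)
      = (Complex.I * (q:ℂ)/2) • (X 0 ^ (p+1) * X 1 ^ (q-1))
        + (Complex.I * (p:ℂ)/2) • (X 0 ^ (p-1) * X 1 ^ (q+1)) := by
  rw [Dop_mono]
  simp [Xsu]
  module

lemma sumsq (p q : ℕ) :
    (∑ r : Fin 3, Dop (Xsu r) ∘ₗ Dop (Xsu r)) (X 0 ^ p * X 1 ^ q : P2)
      = (-(((p:ℂ)+q) * ((p:ℂ)+q+2)) / 4) • (X 0 ^ p * X 1 ^ q) := by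
  simp only [Fin.sum_univ_three, LinearMap.add_apply, LinearMap.comp_apply]
  rcases p with _|_|p <;> rcases q with _|_|q <;>
  simp only [D0_mono, D1_mono, D2_mono, map_add, map_sub, map_neg, map_smul, smul_smul,
      Nat.add_sub_cancel, Nat.succ_sub_one, Nat.zero_sub, Nat.sub_zero, Nat.sub_self,
      Nat.cast_zero, Nat.cast_one, Nat.cast_add, Nat.cast_ofNat,
      zero_div, zero_mul, mul_zero, zero_smul, smul_zero, add_zero, zero_add, neg_zero,
      sub_zero, zero_sub] <;>
  norm_num [add_assoc] <;>
  match_scalars <;>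
  ring_nf <;>
  (try simp only [Complex.I_sq]) <;>
  (try norm_num) <;>
  (try ring_nf)

lemma ltsq (x y : P2) :
    (∑ r : Fin 3, lten (Dop (Xsu r)) ∘ₗ lten (Dop (Xsu r))) (x ⊗ₜ[ℂ] y)
      = ((∑ r : Fin 3, Dop (Xsu r) ∘ₗ Dop (Xsu r)) x) ⊗ₜ[ℂ] y := by
  simp [lten, Fin.sum_univ_three, add_tmul]

lemma rtsq (x y : P2) :
    (∑ r : Fin 3, rten (Dop (Xsu r)) ∘ₗ rten (Dop (Xsu r))) (x ⊗ₜ[ℂ] y)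
      = x ⊗ₜ[ℂ] ((∑ r : Fin 3, Dop (Xsu r) ∘ₗ Dop (Xsu r)) y) := by
  simp [rten, Fin.sum_univ_three, tmul_add]

lemma crossAux (p q s t : ℕ) :
    (∑ r : Fin 3, lten (Dop (Xsu r)) ∘ₗ rten (Dop (Xsu r)))
        ((X 0 ^ p * X 1 ^ q : P2) ⊗ₜ[ℂ] (X 0 ^ s * X 1 ^ t : P2))
      = (-(((p:ℂ)-q) * ((s:ℂ)-t)) / 4) •
          ((X 0 ^ p * X 1 ^ q : P2) ⊗ₜ[ℂ] (X 0 ^ s * X 1 ^ t : P2))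
        - (((q:ℂ) * s) / 2) •
          ((X 0 ^ (p+1) * X 1 ^ (q-1) : P2) ⊗ₜ[ℂ] (X 0 ^ (s-1) * X 1 ^ (t+1) : P2))
        - (((p:ℂ) * t) / 2) •
          ((X 0 ^ (p-1) * X 1 ^ (q+1) : P2) ⊗ₜ[ℂ] (X 0 ^ (s+1) * X 1 ^ (t-1) : P2)) := by
  simp only [Fin.sum_univ_three, LinearMap.add_apply, LinearMap.comp_apply, lten, rten,
    TensorProduct.map_tmul, LinearMap.id_coe, id_eq]
  simp only [D0_mono, D1_mono, D2_mono]
  simp only [sub_tmul, tmul_sub, add_tmul, tmul_add, ← smul_tmul', tmul_smul, smul_smul]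
  match_scalars <;> ring_nf <;> (try simp only [Complex.I_sq]) <;> (try norm_num) <;> (try ring_nf)

lemma CasOp_mono (p q s t : ℕ) :
    CasOp ((X 0 ^ p * X 1 ^ q : P2) ⊗ₜ[ℂ] (X 0 ^ s * X 1 ^ t : P2))
      = (-(((p:ℂ)+q)*((p:ℂ)+q+2))/8 - 5*(((s:ℂ)+t)*((s:ℂ)+t+2))/8
          + ((p:ℂ)-q)*((s:ℂ)-t)/4) •
          ((X 0 ^ p * X 1 ^ q : P2) ⊗ₜ[ℂ] (X 0 ^ s * X 1 ^ t : P2))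
        + (((q:ℂ) * s) / 2) •
          ((X 0 ^ (p+1) * X 1 ^ (q-1) : P2) ⊗ₜ[ℂ] (X 0 ^ (s-1) * X 1 ^ (t+1) : P2))
        + (((p:ℂ) * t) / 2) •
          ((X 0 ^ (p-1) * X 1 ^ (q+1) : P2) ⊗ₜ[ℂ] (X 0 ^ (s+1) * X 1 ^ (t-1) : P2)) := by
  rw [CasOp]
  simp only [LinearMap.sub_apply, LinearMap.add_apply, LinearMap.smul_apply]
  rw [ltsq, rtsq, crossAux, sumsq p q, sumsq s t]
  simp only [← smul_tmul', tmul_smul, smul_smul]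
  match_scalars <;> ring

lemma keyNat (l i m a : ℕ) (hi : i ≤ l) (ha1 : 1 ≤ a) (ham : a ≤ m) :
    ((l-i) * a) * ((l-i) * a) * ((i+1).factorial * (l-(i+1)).factorial)
        * ((a-1).factorial * (m-(a-1)).factorial)
      = ((i+1) * (l-i) * a * (m-a+1))
        * ((i.factorial * (l-i).factorial) * (a.factorial * (m-a).factorial)) := by
  obtain ⟨u, rfl⟩ := Nat.exists_eq_add_of_le hi
  obtain ⟨a', rfl⟩ := Nat.exists_eq_add_of_le ha1
  obtain ⟨b, rfl⟩ := Nat.exists_eq_add_of_le ham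
  rcases u with _|v
  · simp
  · have e1 : i + (v+1) - i = v + 1 := by omega
    have e2 : i + (v+1) - (i+1) = v := by omega
    have e3 : 1 + a' - 1 = a' := by omega
    have e4 : 1 + a' + b - a' = b + 1 := by omega
    have e5 : 1 + a' + b - (1 + a') = b := by omega
    rw [e1, e2, e3, e4, e5, Nat.factorial_succ (i), Nat.factorial_succ v,
      Nat.factorial_succ b]
    have : (1 + a').factorial = (1 + a') * a'.factorial := by
      rw [Nat.add_comm 1 a', Nat.factorial_succ]
    rw [this]
    ring

lemma sqrtpos (x y : ℕ) : (0:ℝ) < Real.sqrt ((x.factorial * y.factorial : ℕ) : ℝ) := by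
  apply Real.sqrt_pos.2
  exact_mod_cast Nat.mul_pos x.factorial_pos y.factorial_pos

lemma keyR (l i m a : ℕ) (hi : i ≤ l) (ha1 : 1 ≤ a) (ham : a ≤ m) :
    (((l-i : ℕ) : ℝ) * (a : ℕ)) / 2
        * (Real.sqrt ((i.factorial * (l-i).factorial : ℕ) : ℝ))⁻¹
        * (Real.sqrt ((a.factorial * (m-a).factorial : ℕ) : ℝ))⁻¹
      = 1/2 * Real.sqrt ((((i+1) * (l-i) * a * (m-a+1) : ℕ)) : ℝ)
        * (Real.sqrt (((i+1).factorial * (l-(i+1)).factorial : ℕ) : ℝ))⁻¹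
        * (Real.sqrt (((a-1).factorial * (m-(a-1)).factorial : ℕ) : ℝ))⁻¹ := by
  have h1 := sqrtpos i (l-i)
  have h2 := sqrtpos a (m-a)
  have h3 := sqrtpos (i+1) (l-(i+1))
  have h4 := sqrtpos (a-1) (m-(a-1))
  have hli : (0:ℝ) ≤ (l:ℝ) - i := by
    have := (Nat.cast_le (α := ℝ)).2 hi; linarith
  have hma : (0:ℝ) ≤ (m:ℝ) - a := by
    have := (Nat.cast_le (α := ℝ)).2 ham; linarith
  have sq2 : ∀ x y : ℝ, 0 ≤ x → 0 ≤ y → x^2 = y^2 → x = y := by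
    intro x y hx hy h; nlinarith [sq_nonneg (x-y), sq_nonneg (x+y)]
  field_simp
  apply sq2
  · positivity
  · positivity
  have hcast := congrArg (Nat.cast : ℕ → ℝ) (keyNat l i m a hi ha1 ham)
  push_cast [Nat.cast_sub hi, Nat.cast_sub ha1, Nat.cast_sub ham,
    Nat.cast_sub (by omega : a - 1 ≤ m)] at hcast
  have hrad : (0:ℝ) ≤ ((i:ℝ) + 1) * ((l:ℝ) - i) * a * ((m:ℝ) - a + 1) := by positivity
  have s1 : ∀ x:ℝ, 0 ≤ x → Real.sqrt x ^ 2 = x := fun x hx => Real.sq_sqrt hx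
  simp only [mul_pow]
  simp only [Real.sq_sqrt (Nat.cast_nonneg _)]
  push_cast [Nat.cast_sub hi, Nat.cast_sub ha1, Nat.cast_sub ham, Nat.cast_sub (by omega : a - 1 ≤ m)]
  linear_combination hcast

theorem statement4 (l m i a : ℕ) (hi : i ≤ l) (ha : a ≤ m) :
    CasOp (vb l i ⊗ₜ[ℂ] vb m a)
      = -(((l : ℂ) * ((l : ℂ) + 2) / 8 + 5 * (m : ℂ) * ((m : ℂ) + 2) / 8
            - (2 * (i : ℂ) - (l : ℂ)) * (2 * (a : ℂ) - (m : ℂ)) / 4))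
          • (vb l i ⊗ₜ[ℂ] vb m a)
        + (((1 / 2 : ℝ) * Real.sqrt (((i : ℝ) + 1) * ((l : ℝ) - (i : ℝ)) * (a : ℝ)
              * ((m : ℝ) - (a : ℝ) + 1)) : ℝ) : ℂ)
          • (vb l (i + 1) ⊗ₜ[ℂ] vb m (a - 1))
        + (((1 / 2 : ℝ) * Real.sqrt ((i : ℝ) * ((l : ℝ) - (i : ℝ) + 1) * ((a : ℝ) + 1)
              * ((m : ℝ) - (a : ℝ))) : ℝ) : ℂ)
          • (vb l (i - 1) ⊗ₜ[ℂ] vb m (a + 1)) := by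
  have e1 : l - (i+1) = l - i - 1 := by omega
  have e2 : m - (a+1) = m - a - 1 := by omega
  simp only [vb, ← smul_tmul', tmul_smul, smul_smul, map_smul, e1, e2]
  rw [CasOp_mono]
  rcases Nat.eq_zero_or_pos i with rfl | hi1 <;> rcases Nat.eq_zero_or_pos a with rfl | ha1
  · -- i = 0, a = 0
    simp only [Nat.cast_zero, zero_mul, mul_zero, zero_div, Real.sqrt_zero,
      Complex.ofReal_zero, zero_smul, smul_zero, add_zero, zero_add]
    match_scalars
    push_cast [Nat.cast_sub hi, Nat.cast_sub ha]
    ring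
  · -- i = 0, a ≥ 1
    have e4 : m - (a-1) = m - a + 1 := by omega
    rw [e4]
    have K := keyR l 0 m a hi ha1 ha
    rw [e1, e4] at K
    have KC := congrArg (Complex.ofReal) K
    push_cast [Nat.cast_sub hi, Nat.cast_sub ha] at KC
    simp only [Nat.cast_zero, zero_mul, mul_zero, zero_div, Real.sqrt_zero,
      Complex.ofReal_zero, zero_smul, smul_zero, add_zero, zero_add]
    match_scalars
    · push_cast [Nat.cast_sub hi, Nat.cast_sub ha]; ring
    · push_cast [Nat.cast_sub hi, Nat.cast_sub ha] at KC ⊢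
      ring_nf at KC ⊢
      linear_combination KC
  · -- i ≥ 1, a = 0
    have e3 : l - (i-1) = l - i + 1 := by omega
    rw [e3]
    have K := keyR m 0 l i ha hi1 hi
    rw [e2, e3] at K
    have KC := congrArg (Complex.ofReal) K
    push_cast [Nat.cast_sub hi, Nat.cast_sub ha] at KC
    simp only [Nat.cast_zero, zero_mul, mul_zero, zero_div, Real.sqrt_zero,
      Complex.ofReal_zero, zero_smul, smul_zero, add_zero, zero_add]
    match_scalars
    · push_cast [Nat.cast_sub hi, Nat.cast_sub ha]; ring
    · push_cast [Nat.cast_sub hi, Nat.cast_sub ha] at KC ⊢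
      ring_nf at KC ⊢
      linear_combination KC
  · -- i ≥ 1, a ≥ 1
    have e3 : l - (i-1) = l - i + 1 := by omega
    have e4 : m - (a-1) = m - a + 1 := by omega
    rw [e3, e4]
    have K2 := keyR l i m a hi ha1 ha
    rw [e1, e4] at K2
    have KC2 := congrArg (Complex.ofReal) K2
    push_cast [Nat.cast_sub hi, Nat.cast_sub ha] at KC2
    have K3 := keyR m a l i ha hi1 hi
    rw [e2, e3] at K3
    have KC3 := congrArg (Complex.ofReal) K3
    push_cast [Nat.cast_sub hi, Nat.cast_sub ha] at KC3
    match_scalars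
    · push_cast [Nat.cast_sub hi, Nat.cast_sub ha]; ring
    · push_cast [Nat.cast_sub hi, Nat.cast_sub ha] at KC3 ⊢
      ring_nf at KC3 ⊢
      linear_combination KC3
    · push_cast [Nat.cast_sub hi, Nat.cast_sub ha] at KC2 ⊢
      ring_nf at KC2 ⊢
      linear_combination KC2

end
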